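/- If A is a subset of ℝ whose closure is uncountable, then A contains a subset that is order-isomorphic to ℚ. -/

import Mathlib

open Set

/-- Points `x > p` (in `K`) such that `K ∩ (p, x)` is countable form a countable set. -/
lemma countable_badLeft (K : Set ℝ) (p : ℝ) :
    {x | x ∈ K ∧ p < x ∧ (K ∩ Set.Ioo p x).Countable}.Countable := by
  set M : Set ℝ := {x | p < x ∧ (K ∩ Set.Ioo p x).Countable} with hM
  have hpiece : ∀ q : ℚ,
      {y | y ∈ K ∩ Set.Ioo p (q : ℝ) ∧ (K ∩ Set.Ioo p (q : ℝ)).Countable}.Countable := by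
    intro q
    by_cases hc : (K ∩ Set.Ioo p (q : ℝ)).Countable
    · exact hc.mono fun y hy => hy.1
    · have : {y | y ∈ K ∩ Set.Ioo p (q : ℝ) ∧ (K ∩ Set.Ioo p (q : ℝ)).Countable} = ∅ := by
        ext y; simp only [Set.mem_setOf_eq, Set.mem_empty_iff_false, iff_false]
        tauto
      rw [this]; exact Set.countable_empty
  have hsub : {x | x ∈ K ∧ p < x ∧ (K ∩ Set.Ioo p x).Countable} ⊆
      (M ∩ upperBounds M) ∪
        ⋃ q : ℚ, {y | y ∈ K ∩ Set.Ioo p (q : ℝ) ∧ (K ∩ Set.Ioo p (q : ℝ)).Countable} := by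
    rintro x ⟨hxK, hpx, hcx⟩
    by_cases hub : x ∈ upperBounds M
    · exact Or.inl ⟨⟨hpx, hcx⟩, hub⟩
    · right
      rw [upperBounds, Set.mem_setOf_eq] at hub
      push_neg at hub
      obtain ⟨x', hx'M, hxx'⟩ := hub
      obtain ⟨q, hq1, hq2⟩ := exists_rat_btwn hxx'
      refine Set.mem_iUnion.mpr ⟨q, ⟨⟨hxK, hpx, hq1⟩, ?_⟩⟩
      exact hx'M.2.mono
        (Set.inter_subset_inter_right _ (Set.Ioo_subset_Ioo le_rfl hq2.le))
  refine (Set.Countable.union ?_ (Set.countable_iUnion hpiece)).mono hsub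
  have : (M ∩ upperBounds M).Subsingleton := by
    intro x hx y hy
    exact le_antisymm (hy.2 hx.1) (hx.2 hy.1)
  exact this.countable

/-- Symmetric version: points `x < p` such that `K ∩ (x, p)` is countable form a countable set. -/
lemma countable_badRight (K : Set ℝ) (p : ℝ) :
    {x | x ∈ K ∧ x < p ∧ (K ∩ Set.Ioo x p).Countable}.Countable := by
  set M : Set ℝ := {x | x < p ∧ (K ∩ Set.Ioo x p).Countable} with hM
  have hpiece : ∀ q : ℚ,
      {y | y ∈ K ∩ Set.Ioo (q : ℝ) p ∧ (K ∩ Set.Ioo (q : ℝ) p).Countable}.Countable := by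
    intro q
    by_cases hc : (K ∩ Set.Ioo (q : ℝ) p).Countable
    · exact hc.mono fun y hy => hy.1
    · have : {y | y ∈ K ∩ Set.Ioo (q : ℝ) p ∧ (K ∩ Set.Ioo (q : ℝ) p).Countable} = ∅ := by
        ext y; simp only [Set.mem_setOf_eq, Set.mem_empty_iff_false, iff_false]
        tauto
      rw [this]; exact Set.countable_empty
  have hsub : {x | x ∈ K ∧ x < p ∧ (K ∩ Set.Ioo x p).Countable} ⊆
      (M ∩ lowerBounds M) ∪
        ⋃ q : ℚ, {y | y ∈ K ∩ Set.Ioo (q : ℝ) p ∧ (K ∩ Set.Ioo (q : ℝ) p).Countable} := by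
    rintro x ⟨hxK, hpx, hcx⟩
    by_cases hub : x ∈ lowerBounds M
    · exact Or.inl ⟨⟨hpx, hcx⟩, hub⟩
    · right
      rw [lowerBounds, Set.mem_setOf_eq] at hub
      push_neg at hub
      obtain ⟨x', hx'M, hxx'⟩ := hub
      obtain ⟨q, hq1, hq2⟩ := exists_rat_btwn hxx'
      refine Set.mem_iUnion.mpr ⟨q, ⟨⟨hxK, hq2, hpx⟩, ?_⟩⟩
      exact hx'M.2.mono
        (Set.inter_subset_inter_right _ (Set.Ioo_subset_Ioo hq1.le le_rfl))
  refine (Set.Countable.union ?_ (Set.countable_iUnion hpiece)).mono hsub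
  have : (M ∩ lowerBounds M).Subsingleton := by
    intro x hx y hy
    exact le_antisymm (hx.2 hy.1) (hy.2 hx.1)
  exact this.countable

/-- `x` is a two-sided condensation point of `K`. -/
def TwoSidedCond (K : Set ℝ) (x : ℝ) : Prop :=
  (∀ a < x, ¬ (K ∩ Set.Ioo a x).Countable) ∧ (∀ b, x < b → ¬ (K ∩ Set.Ioo x b).Countable)

lemma countable_not_twoSided (K : Set ℝ) :
    {x | x ∈ K ∧ ¬ TwoSidedCond K x}.Countable := by
  have hsub : {x | x ∈ K ∧ ¬ TwoSidedCond K x} ⊆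
      (⋃ q : ℚ, {x | x ∈ K ∧ (q : ℝ) < x ∧ (K ∩ Set.Ioo (q : ℝ) x).Countable}) ∪
      (⋃ q : ℚ, {x | x ∈ K ∧ x < (q : ℝ) ∧ (K ∩ Set.Ioo x (q : ℝ)).Countable}) := by
    rintro x ⟨hxK, hx⟩
    rw [TwoSidedCond, not_and_or] at hx
    rcases hx with hx | hx
    · push_neg at hx
      obtain ⟨a, ha, hc⟩ := hx
      obtain ⟨q, hq1, hq2⟩ := exists_rat_btwn ha
      exact Or.inl <| Set.mem_iUnion.mpr ⟨q, hxK, hq2,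
        hc.mono (Set.inter_subset_inter_right _ (Set.Ioo_subset_Ioo hq1.le le_rfl))⟩
    · push_neg at hx
      obtain ⟨b, hb, hc⟩ := hx
      obtain ⟨q, hq1, hq2⟩ := exists_rat_btwn hb
      exact Or.inr <| Set.mem_iUnion.mpr ⟨q, hxK, hq1,
        hc.mono (Set.inter_subset_inter_right _ (Set.Ioo_subset_Ioo le_rfl hq2.le))⟩
  exact ((Set.countable_iUnion fun q : ℚ => countable_badLeft K (q : ℝ)).union
    (Set.countable_iUnion fun q : ℚ => countable_badRight K (q : ℝ))).mono hsub

/-- If the closure of `A ⊆ ℝ` is uncountable, then `A` contains a subset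
order-isomorphic to `ℚ`, i.e. there is a strictly increasing map `ℚ → ℝ`
whose range lies in `A`. -/
theorem exists_rat_order_copy_of_uncountable_closure (A : Set ℝ)
    (h : ¬ (closure A).Countable) :
    ∃ f : ℚ → ℝ, StrictMono f ∧ ∀ q, f q ∈ A := by
  set K := closure A with hKdef
  set C : Set ℝ := {x | x ∈ K ∧ TwoSidedCond K x} with hCdef
  have hKC : (K \ C).Countable := by
    refine (countable_not_twoSided K).mono ?_
    rintro x ⟨hxK, hxC⟩
    exact ⟨hxK, fun ht => hxC ⟨hxK, ht⟩⟩
  have hCunc : ¬ C.Countable := fun hc => h <| (hc.union hKC).mono fun x hx => by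
    by_cases hx' : x ∈ C
    · exact Or.inl hx'
    · exact Or.inr ⟨hx, hx'⟩
  have hdense : ∀ x y : ℝ, x < y → y ∈ C → ∃ z ∈ C, x < z ∧ z < y := by
    intro x y hxy hyC
    have hunc : ¬ (K ∩ Set.Ioo x y).Countable := hyC.2.1 x hxy
    have hns : ¬ (K ∩ Set.Ioo x y ⊆ K \ C) := fun hs => hunc (hKC.mono hs)
    rw [Set.not_subset] at hns
    obtain ⟨z, hz1, hz2⟩ := hns
    refine ⟨z, ?_, hz1.2.1, hz1.2.2⟩
    by_contra hzC
    exact hz2 ⟨hz1.1, hzC⟩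
  have hA : ∀ x y : ℝ, x < y → y ∈ C → ∃ a ∈ A, x < a ∧ a < y := by
    intro x y hxy hyC
    have hunc : ¬ (K ∩ Set.Ioo x y).Countable := hyC.2.1 x hxy
    have hne : (K ∩ Set.Ioo x y).Nonempty := by
      rw [Set.nonempty_iff_ne_empty]
      intro he
      rw [he] at hunc
      exact hunc Set.countable_empty
    obtain ⟨z, hzK, hzI⟩ := hne
    obtain ⟨a, haI, haA⟩ := _root_.mem_closure_iff.mp hzK (Set.Ioo x y) isOpen_Ioo hzI
    exact ⟨a, haA, haI.1, haI.2⟩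
  haveI : Nontrivial ↥C := by
    rw [Set.nontrivial_coe_sort]
    by_contra hnt
    rw [Set.not_nontrivial_iff] at hnt
    exact hCunc hnt.countable
  haveI : DenselyOrdered ↥C := ⟨by
    rintro ⟨x, hx⟩ ⟨y, hy⟩ hxy
    obtain ⟨z, hzC, hz1, hz2⟩ := hdense x y (Subtype.mk_lt_mk.mp hxy) hy
    exact ⟨⟨z, hzC⟩, Subtype.mk_lt_mk.mpr hz1, Subtype.mk_lt_mk.mpr hz2⟩⟩
  haveI : Countable (ℚ ×ₗ ℚ) := (inferInstance : Countable (ℚ × ℚ))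
  obtain ⟨e⟩ := Order.embedding_from_countable_to_dense (α := ℚ ×ₗ ℚ) (β := ↥C)
  have hpick : ∀ q : ℚ, ∃ a ∈ A,
      (e (toLex (q, (0 : ℚ))) : ℝ) < a ∧ a < (e (toLex (q, (1 : ℚ))) : ℝ) := by
    intro q
    have hlt : e (toLex (q, (0 : ℚ))) < e (toLex (q, (1 : ℚ))) :=
      e.strictMono (Prod.Lex.lt_iff.mpr (Or.inr ⟨rfl, zero_lt_one⟩))
    exact hA _ _ (Subtype.coe_lt_coe.mpr hlt) (e (toLex (q, (1 : ℚ)))).2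
  choose f hfA hflt hfgt using hpick
  refine ⟨f, ?_, hfA⟩
  intro q q' hqq'
  have hmid : (e (toLex (q, (1 : ℚ))) : ℝ) < (e (toLex (q', (0 : ℚ))) : ℝ) :=
    Subtype.coe_lt_coe.mpr (e.strictMono (Prod.Lex.lt_iff.mpr (Or.inl hqq')))
  exact (hfgt q).trans (hmid.trans (hflt q'))
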